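/- The linear map Ψ₂ : ḡ₆ → ḡ₆ determined by Ψ₂(X̄₁) = X̄₁, Ψ₂(X̄₂) = X̄₂ + (1/4)Z̄₁, Ψ₂(Ȳ₁) = Ȳ₁, Ψ₂(Ȳ₂) = Ȳ₂ − Z̄₁ − Z̄₂, Ψ₂(Z̄₁) = Z̄₁, Ψ₂(Z̄₂) = Z̄₂ is a Lie algebra automorphism of ḡ₆, and it is almost inner: for every X ∈ ḡ₆ there exists A ∈ ḡ₆ with Ψ₂(X) = X + [A, X]. -/
import Mathlib


noncomputable section

/-- The bracket of the Lie algebra ḡ₆ on ℝ⁶ with basis X̄₁,X̄₂,Ȳ₁,Ȳ₂,Z̄₁,Z̄₂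
at coordinates 0,…,5. -/
def br6 (u v : Fin 6 → ℝ) : Fin 6 → ℝ :=
  ![0, 0, 0, 0,
    u 0 * v 2 - u 2 * v 0 + (u 1 * v 3 - u 3 * v 1),
    u 0 * v 3 - u 3 * v 0]

def X1 : Fin 6 → ℝ := Pi.single 0 1
def X2 : Fin 6 → ℝ := Pi.single 1 1
def Y1 : Fin 6 → ℝ := Pi.single 2 1
def Y2 : Fin 6 → ℝ := Pi.single 3 1
def Z1 : Fin 6 → ℝ := Pi.single 4 1
def Z2 : Fin 6 → ℝ := Pi.single 5 1

/-- The linear map with Ψ₂(X̄₁)=X̄₁, Ψ₂(X̄₂)=X̄₂+(1/4)Z̄₁, Ψ₂(Ȳ₁)=Ȳ₁,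
Ψ₂(Ȳ₂)=Ȳ₂−Z̄₁−Z̄₂, Ψ₂(Z̄₁)=Z̄₁, Ψ₂(Z̄₂)=Z̄₂. -/
def Psi2 (u : Fin 6 → ℝ) : Fin 6 → ℝ :=
  u 0 • X1 + u 1 • (X2 + (1/4 : ℝ) • Z1) + u 2 • Y1 +
  u 3 • (Y2 - Z1 - Z2) + u 4 • Z1 + u 5 • Z2

@[simp] lemma vec6_five {α : Type*} (a b c d e f : α) :
    ![a, b, c, d, e, f] (5 : Fin 6) = f := rfl

lemma Psi2_eq (u : Fin 6 → ℝ) :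
    Psi2 u = ![u 0, u 1, u 2, u 3, u 4 + u 1 / 4 - u 3, u 5 - u 3] := by
  funext i
  fin_cases i <;>
    simp [Psi2, X1, X2, Y1, Y2, Z1, Z2, Pi.single_apply] <;> ring

/-- Ψ₂ is a Lie algebra automorphism of ḡ₆ and is almost inner. -/
theorem stmt14 :
    IsLinearMap ℝ Psi2 ∧ Function.Bijective Psi2 ∧
    (∀ u v, Psi2 (br6 u v) = br6 (Psi2 u) (Psi2 v)) ∧
    (∀ X, ∃ A, Psi2 X = X + br6 A X) := by
  refine ⟨⟨?_, ?_⟩, ?_, ?_, ?_⟩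
  · intro u v
    funext i
    simp only [Psi2_eq]
    fin_cases i <;> simp <;> ring
  · intro c u
    funext i
    simp only [Psi2_eq]
    fin_cases i <;> simp <;> ring
  · refine Function.bijective_iff_has_inverse.mpr
      ⟨fun u => ![u 0, u 1, u 2, u 3, u 4 - u 1 / 4 + u 3, u 5 + u 3], ?_, ?_⟩ <;>
      intro u <;> funext i <;> simp only [Psi2_eq] <;> fin_cases i <;> simp <;> ring
  · intro u v
    funext i
    simp only [Psi2_eq]
    fin_cases i <;> simp [br6] <;> ring
  · intro x
    by_cases h0 : x 0 = 0
    · by_cases h3 : x 3 = 0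
      · refine ⟨![0, 0, 0, -1/4, 0, 0], ?_⟩
        funext i
        simp only [Psi2_eq]
        fin_cases i <;> simp [br6, h0, h3] <;> ring
      · refine ⟨![-1, (x 2 - x 3) / x 3, 0, -1/4, 0, 0], ?_⟩
        funext i
        simp only [Psi2_eq]
        fin_cases i <;> simp [br6, h0] <;> (try ring)
        all_goals field_simp
        all_goals ring
    · refine ⟨![0, 0, (-(x 1)/4 + x 3 - x 3 * x 1 / x 0) / x 0, x 3 / x 0, 0, 0], ?_⟩
      funext i
      simp only [Psi2_eq]
      fin_cases i <;> simp [br6] <;> (try ring)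
      all_goals field_simp
      all_goals ring
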